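/- Let q ≥ 5 be a prime, put q* = (−1)^{(q−1)/2}·q, and let u_q(j) = (3^j − q*·(−1)^j)/4 for j ≥ 1 (the Browkin–Sălăjan sequence for q). Then for every integer e ≥ 1 the terms u_q(1), u_q(2), …, u_q(2^e) are pairwise incongruent modulo 2^e; consequently the discriminator satisfies D_q(2^e) = 2^e for every e ≥ 1. -/

import Mathlib

/-- The Browkin–Sălăjan sequence for a prime `q ≥ 5`:
`u_q(j) = (3^j − q*·(−1)^j)/4` where `q* = (−1)^((q−1)/2)·q`. -/
def browkinSalajan (q : ℕ) (j : ℕ) : ℤ :=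
  (3 ^ j - ((-1) ^ ((q - 1) / 2) * (q : ℤ)) * (-1) ^ j) / 4

/-- The discriminator `D_q(n)`: the smallest positive integer `m` such that
`u_q(1), …, u_q(n)` are pairwise incongruent modulo `m`. -/
noncomputable def browkinSalajanDisc (q : ℕ) (n : ℕ) : ℕ :=
  sInf {m : ℕ | 0 < m ∧
    ∀ i, 1 ≤ i → i ≤ n → ∀ j, 1 ≤ j → j ≤ n →
      browkinSalajan q i ≡ browkinSalajan q j [ZMOD (m : ℤ)] → i = j}

/-- `(1+t)^m = 1 + m·t + t²·c` for some `c`. -/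
lemma bs_binom (t : ℤ) (m : ℕ) : ∃ c : ℤ, (1 + t) ^ m = 1 + m * t + t ^ 2 * c := by
  induction m with
  | zero => exact ⟨0, by ring⟩
  | succ n ih =>
    obtain ⟨c, hc⟩ := ih
    refine ⟨n + c + t * c, ?_⟩
    rw [pow_succ, hc]
    push_cast
    ring

/-- `3^(2^k) = 1 + 2^(k+2)·u` with `u` odd, for `k ≥ 1`. -/
lemma bs_pow_two_val : ∀ k : ℕ, 1 ≤ k → ∃ u : ℤ, Odd u ∧ (3 : ℤ) ^ (2 ^ k) = 1 + 2 ^ (k + 2) * u := by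
  intro k hk
  induction k with
  | zero => omega
  | succ n ih =>
    rcases Nat.eq_or_lt_of_le hk with h1 | h1
    · refine ⟨1, odd_one, ?_⟩
      have : n = 0 := by omega
      subst this; norm_num
    · have hn : 1 ≤ n := by omega
      obtain ⟨u, hu, h⟩ := ih hn
      refine ⟨u + 2 ^ (n + 1) * u ^ 2, ?_, ?_⟩
      · rcases hu with ⟨w, hw⟩
        exact ⟨w + 2 ^ n * u ^ 2, by rw [hw]; ring⟩
      · have : (3 : ℤ) ^ (2 ^ (n + 1)) = ((3 : ℤ) ^ (2 ^ n)) ^ 2 := by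
          rw [← pow_mul, pow_succ]
        rw [this, h]
        ring

/-- If `d` is even, `0 < d < 2^e`, then `2^(e+2) ∤ 3^d − 1`. -/
lemma bs_not_dvd (e d : ℕ) (hd : Even d) (h0 : 0 < d) (hlt : d < 2 ^ e) :
    ¬ ((2 : ℤ) ^ (e + 2) ∣ 3 ^ d - 1) := by
  intro H
  obtain ⟨k, m, hm, hdm⟩ := Nat.exists_eq_two_pow_mul_odd (n := d) (by omega)
  have hk1 : 1 ≤ k := by
    by_contra hk
    have : k = 0 := by omega
    subst this
    simp only [pow_zero, one_mul] at hdm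
    subst hdm
    exact (Nat.not_even_iff_odd.mpr hm) hd
  have hke : k < e := by
    by_contra hke
    have : 2 ^ e ≤ 2 ^ k := Nat.pow_le_pow_right (by norm_num) (by omega)
    have hm1 : 1 ≤ m := hm.pos
    nlinarith [hdm, hlt]
  obtain ⟨u, hu, h3⟩ := bs_pow_two_val k hk1
  obtain ⟨c, hc⟩ := bs_binom ((2 : ℤ) ^ (k + 2) * u) m
  have h3d : (3 : ℤ) ^ d - 1 = 2 ^ (k + 2) * (m * u + 2 ^ (k + 2) * (u ^ 2 * c)) := by
    have : (3 : ℤ) ^ d = ((3 : ℤ) ^ (2 ^ k)) ^ m := by rw [← pow_mul, ← hdm]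
    rw [this, h3, hc]
    ring
  set w : ℤ := m * u + 2 ^ (k + 2) * (u ^ 2 * c) with hw
  have hwodd : Odd w := by
    have hmu : Odd ((m : ℤ) * u) := (Int.odd_coe_nat m |>.mpr hm).mul hu
    rcases hmu with ⟨v, hv⟩
    exact ⟨v + 2 ^ (k + 1) * (u ^ 2 * c), by rw [hw, hv]; ring⟩
  -- 2^(k+3) divides 3^d − 1 since k+3 ≤ e+2
  have hdvd : (2 : ℤ) ^ (k + 3) ∣ 3 ^ d - 1 :=
    dvd_trans (pow_dvd_pow 2 (by omega)) H
  rw [h3d] at hdvd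
  have h2w : (2 : ℤ) ∣ w := by
    have : (2 : ℤ) ^ (k + 2) * 2 ∣ 2 ^ (k + 2) * w := by
      rw [← pow_succ]; exact hdvd
    exact (mul_dvd_mul_iff_left (a := (2:ℤ)^(k+2)) (by positivity)).mp this
  rcases hwodd with ⟨v, hv⟩
  omega

/-- `q* ≡ 1 mod 4`. -/
lemma bs_qstar (q : ℕ) (hq : q.Prime) (hq5 : 5 ≤ q) :
    (4 : ℤ) ∣ (-1) ^ ((q - 1) / 2) * (q : ℤ) - 1 := by
  have hodd : q % 2 = 1 := Nat.odd_iff.mp (hq.odd_of_ne_two (by omega))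
  rcases (show q % 4 = 1 ∨ q % 4 = 3 by omega) with h | h
  · have : ((q - 1) / 2) % 2 = 0 := by omega
    rw [Even.neg_one_pow (Nat.even_iff.mpr this), one_mul]
    omega
  · have : ((q - 1) / 2) % 2 = 1 := by omega
    rw [Odd.neg_one_pow (Nat.odd_iff.mpr this)]
    have : (4 : ℤ) ∣ (q : ℤ) + 1 := by omega
    omega

/-- `4 ∣ 3^j − q*·(−1)^j`. -/
lemma bs_dvd_four (q : ℕ) (hq : q.Prime) (hq5 : 5 ≤ q) (j : ℕ) :
    (4 : ℤ) ∣ 3 ^ j - ((-1) ^ ((q - 1) / 2) * (q : ℤ)) * (-1) ^ j := by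
  set s : ℤ := (-1) ^ ((q - 1) / 2) * (q : ℤ) with hs
  have hs1 : (4 : ℤ) ∣ s - 1 := bs_qstar q hq hq5
  have h3 : (3 : ℤ) ≡ -1 [ZMOD 4] := by decide
  have h3j : (3 : ℤ) ^ j ≡ (-1) ^ j [ZMOD 4] := h3.pow j
  have hsmod : s ≡ 1 [ZMOD 4] := (Int.modEq_iff_dvd.mpr (by simpa using hs1)).symm
  have : (3 : ℤ) ^ j - s * (-1) ^ j ≡ (-1) ^ j - 1 * (-1) ^ j [ZMOD 4] :=
    h3j.sub (hsmod.mul_right _)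
  have h0 : (3 : ℤ) ^ j - s * (-1) ^ j ≡ 0 [ZMOD 4] := by
    simpa using this
  exact (Int.modEq_zero_iff_dvd).mp h0

lemma bs_four_mul (q : ℕ) (hq : q.Prime) (hq5 : 5 ≤ q) (j : ℕ) :
    4 * browkinSalajan q j = 3 ^ j - ((-1) ^ ((q - 1) / 2) * (q : ℤ)) * (-1) ^ j :=
  Int.mul_ediv_cancel' (bs_dvd_four q hq hq5 j)

/-- `3^n mod 8`. -/
lemma bs_pow3_mod8_even {n : ℕ} (hn : Even n) : (8 : ℤ) ∣ 3 ^ n - 1 := by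
  rcases hn with ⟨t, ht⟩
  have : (3 : ℤ) ^ n = 9 ^ t := by
    rw [ht, show t + t = 2 * t by ring, pow_mul]; norm_num
  rw [this]
  have h : (9 : ℤ) ≡ 1 [ZMOD 8] := by decide
  simpa using (Int.modEq_iff_dvd.mp (h.pow t).symm)

lemma bs_pow3_mod8_odd {n : ℕ} (hn : Odd n) : (8 : ℤ) ∣ 3 ^ n - 3 := by
  rcases hn with ⟨t, ht⟩
  have h9 : (8 : ℤ) ∣ 9 ^ t - 1 := by
    have h : (9 : ℤ) ≡ 1 [ZMOD 8] := by decide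
    simpa using (Int.modEq_iff_dvd.mp (h.pow t).symm)
  have : (3 : ℤ) ^ n = 3 * 9 ^ t := by
    rw [ht, pow_succ, pow_mul]; norm_num; ring
  rw [this]
  obtain ⟨c, hc⟩ := h9
  exact ⟨3 * c, by linarith⟩

/-- Main injectivity lemma. -/
lemma bs_inj (q : ℕ) (hq : q.Prime) (hq5 : 5 ≤ q) (e : ℕ) (he : 1 ≤ e) :
    ∀ i, 1 ≤ i → i ≤ 2 ^ e → ∀ j, 1 ≤ j → j ≤ 2 ^ e →
      browkinSalajan q i ≡ browkinSalajan q j [ZMOD (2 ^ e : ℤ)] → i = j := by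
  set s : ℤ := (-1) ^ ((q - 1) / 2) * (q : ℤ) with hs
  have hs1 : (4 : ℤ) ∣ s - 1 := bs_qstar q hq hq5
  -- symmetric core claim assuming i ≤ j
  have core : ∀ i, 1 ≤ i → ∀ j, j ≤ 2 ^ e → i ≤ j →
      ((2 : ℤ) ^ (e + 2) ∣ (3 ^ j - s * (-1) ^ j) - (3 ^ i - s * (-1) ^ i)) → i = j := by
    intro i hi1 j hj2 hij H
    rcases Nat.even_or_odd i with hpi | hpi <;> rcases Nat.even_or_odd j with hpj | hpj
    -- same parity cases
    case inl.inl | inr.inr =>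
      rw [hpi.neg_one_pow, hpj.neg_one_pow] at H
      have Hd : (2 : ℤ) ^ (e + 2) ∣ 3 ^ j - 3 ^ i := by
        have := H
        have heq : (3 : ℤ) ^ j - s * 1 - (3 ^ i - s * 1) = 3 ^ j - 3 ^ i := by ring
        have heq' : (3 : ℤ) ^ j - s * -1 - (3 ^ i - s * -1) = 3 ^ j - 3 ^ i := by ring
        first
        | (rwa [heq] at this)
        | (rwa [heq'] at this)
      by_contra hne
      have hd0 : 0 < j - i := by omega
      have hdlt : j - i < 2 ^ e := by omega
      have hdeven : Even (j - i) := by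
        rw [Nat.even_sub hij]
        first
        | exact iff_of_true hpj hpi
        | exact iff_of_false (Nat.not_even_iff_odd.mpr hpj) (Nat.not_even_iff_odd.mpr hpi)
      have h3ji : (3 : ℤ) ^ j = 3 ^ i * 3 ^ (j - i) := by
        rw [← pow_add]; congr 1; omega
      have Hd' : (2 : ℤ) ^ (e + 2) ∣ 3 ^ i * (3 ^ (j - i) - 1) := by
        rw [mul_sub, mul_one, ← h3ji]; exact Hd
      have hcop23 : IsCoprime ((2 : ℤ)) 3 := by norm_num
      exact bs_not_dvd e (j - i) hdeven hd0 hdlt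
        ((hcop23.pow).dvd_of_dvd_mul_left Hd')
    -- opposite parity cases
    case inl.inr =>
      -- i even, j odd
      exfalso
      rw [hpi.neg_one_pow, hpj.neg_one_pow] at H
      have H8 : (8 : ℤ) ∣ (3 ^ j - s * (-1)) - (3 ^ i - s * 1) :=
        dvd_trans (pow_dvd_pow (2:ℤ) (show 3 ≤ e + 2 by omega)) H
      have h1 : (8 : ℤ) ∣ 3 ^ j - 3 := bs_pow3_mod8_odd hpj
      have h2 : (8 : ℤ) ∣ 3 ^ i - 1 := bs_pow3_mod8_even hpi
      have H8' : (8 : ℤ) ∣ 3 ^ j - 3 ^ i + 2 * s := by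
        have heq : (3:ℤ) ^ j - s * (-1) - (3 ^ i - s * 1) = 3 ^ j - 3 ^ i + 2 * s := by ring
        rwa [heq] at H8
      obtain ⟨a, ha⟩ := h1; obtain ⟨b, hb⟩ := h2
      omega
    case inr.inl =>
      -- i odd, j even
      exfalso
      rw [hpi.neg_one_pow, hpj.neg_one_pow] at H
      have H8 : (8 : ℤ) ∣ (3 ^ j - s * 1) - (3 ^ i - s * (-1)) :=
        dvd_trans (pow_dvd_pow (2:ℤ) (show 3 ≤ e + 2 by omega)) H
      have h1 : (8 : ℤ) ∣ 3 ^ j - 1 := bs_pow3_mod8_even hpj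
      have h2 : (8 : ℤ) ∣ 3 ^ i - 3 := bs_pow3_mod8_odd hpi
      have H8' : (8 : ℤ) ∣ 3 ^ j - 3 ^ i - 2 * s := by
        have heq : (3:ℤ) ^ j - s * 1 - (3 ^ i - s * (-1)) = 3 ^ j - 3 ^ i - 2 * s := by ring
        rwa [heq] at H8
      obtain ⟨a, ha⟩ := h1; obtain ⟨b, hb⟩ := h2
      omega
  intro i hi1 hi2 j hj1 hj2 h
  have hdvd : (2 : ℤ) ^ e ∣ browkinSalajan q j - browkinSalajan q i := Int.ModEq.dvd h
  have H : (2 : ℤ) ^ (e + 2) ∣ (3 ^ j - s * (-1) ^ j) - (3 ^ i - s * (-1) ^ i) := by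
    obtain ⟨c, hc⟩ := hdvd
    refine ⟨c, ?_⟩
    have h4i := bs_four_mul q hq hq5 i
    have h4j := bs_four_mul q hq hq5 j
    rw [← hs] at h4i h4j
    have : (3 ^ j - s * (-1) ^ j) - (3 ^ i - s * (-1) ^ i)
        = 4 * (browkinSalajan q j - browkinSalajan q i) := by
      rw [mul_sub, h4i, h4j]
    rw [this, hc, pow_add]
    ring
  rcases le_total i j with hij | hij
  · exact core i hi1 j hj2 hij H
  · exact (core j hj1 i hi2 hij (by
      have : (3:ℤ) ^ i - s * (-1) ^ i - (3 ^ j - s * (-1) ^ j)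
          = -((3 ^ j - s * (-1) ^ j) - (3 ^ i - s * (-1) ^ i)) := by ring
      rw [this]
      exact dvd_neg.mpr H)).symm

theorem stmt16 (q : ℕ) (hq : q.Prime) (hq5 : 5 ≤ q) :
    ∀ e : ℕ, 1 ≤ e →
      (∀ i, 1 ≤ i → i ≤ 2 ^ e → ∀ j, 1 ≤ j → j ≤ 2 ^ e →
        browkinSalajan q i ≡ browkinSalajan q j [ZMOD (2 ^ e : ℤ)] → i = j) ∧
      browkinSalajanDisc q (2 ^ e) = 2 ^ e := by
  intro e he
  have hinj := bs_inj q hq hq5 e he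
  refine ⟨hinj, ?_⟩
  have hmem : (2 ^ e : ℕ) ∈ {m : ℕ | 0 < m ∧
      ∀ i, 1 ≤ i → i ≤ 2 ^ e → ∀ j, 1 ≤ j → j ≤ 2 ^ e →
        browkinSalajan q i ≡ browkinSalajan q j [ZMOD (m : ℤ)] → i = j} := by
    refine ⟨Nat.pow_pos (by norm_num), ?_⟩
    intro i hi1 hi2 j hj1 hj2 hmod
    exact hinj i hi1 hi2 j hj1 hj2 (by push_cast at hmod ⊢; exact hmod)
  unfold browkinSalajanDisc
  refine le_antisymm (Nat.sInf_le hmem) (le_csInf ⟨_, hmem⟩ ?_)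
  rintro m ⟨hm0, hm⟩
  by_contra hlt
  push_neg at hlt
  haveI : NeZero m := ⟨hm0.ne'⟩
  obtain ⟨i, hi, j, hj, hne, hfeq⟩ := Finset.exists_ne_map_eq_of_card_lt_of_maps_to
    (s := Finset.Icc 1 (2 ^ e)) (t := (Finset.univ : Finset (ZMod m)))
    (f := fun i => (browkinSalajan q i : ZMod m))
    (by
      rw [Nat.card_Icc, Finset.card_univ, ZMod.card]
      omega)
    (fun a _ => Finset.mem_univ _)
  simp only [Finset.mem_Icc] at hi hj
  exact hne (hm i hi.1 hi.2 j hj.1 hj.2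
    ((ZMod.intCast_eq_intCast_iff _ _ _).mp hfeq))
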